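/- Let X be a real Banach space with dual X*, let ε > ε_0 > 0, let N ≥ 1 and Λ ≥ 1 be integers, let f_1, …, f_N ∈ X be nonzero, and let Σ ⊂ X* be finite with cardinality Λ. Let a_1, …, a_N ∈ ℝ \ {0}, set φ := Σ_{i=1}^N a_i f_i and C := Σ_{i=1}^N |a_i| ‖f_i‖_X > 0. Let K ≥ 1 be an integer with K ≤ min{N − 1, Λ}, and suppose that for every sequence σ_1, …, σ_{K+1} of elements of Σ there exists j ∈ {1, …, K} with σ_{j+1} ∈ Reach({σ_1, …, σ_j}, 2C, ε, ε_0). Then there exist an integer n ∈ {1, …, K}, coefficients c_1, …, c_{n+1} ∈ ℝ, and indices e(1), …, e(n+1) ∈ {1, …, N} such that Σ_{s=1}^{n+1} |c_s| ‖f_{e(s)}‖_X = C and the element u := Σ_{s=1}^{n+1} c_s f_{e(s)} satisfies |σ(φ − u)| ≤ ε for every σ ∈ Σ. Moreover, if a_1, …, a_N > 0 then c_1, …, c_{n+1} ≥ 0. -/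

import Mathlib

/-- The reach set `Reach({σ₁,…,σ_d}, c, θ, θ₀)` of a finite family of functionals. -/
def Reach {X : Type*} [NormedAddCommGroup X] [NormedSpace ℝ X]
    {d : ℕ} (σs : Fin d → StrongDual ℝ X) (c θ θ₀ : ℝ) :
    Set (StrongDual ℝ X) :=
  {σ | ∃ τ : ℝ, 0 ≤ τ ∧ τ ≤ θ / θ₀ ∧
    ∃ β : Fin d → ℝ, (∑ j, |β j|) ≤ τ ∧ ‖σ - ∑ j, β j • σs j‖ ≤ (θ - τ * θ₀) / c}

/-- Summing a `dite`-padded function over `Fin D` equals the sum over `Fin d`. -/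
lemma sum_dite_fin {M : Type*} [AddCommMonoid M] {d D : ℕ} (hdD : d ≤ D) (G : Fin d → M) :
    (∑ i : Fin D, if hi : i.1 < d then G ⟨i.1, hi⟩ else 0) = ∑ i : Fin d, G i := by
  have h1 := Fin.sum_univ_eq_sum_range (fun n => if h : n < d then G ⟨n, h⟩ else 0) D
  have h2 := Fin.sum_univ_eq_sum_range (fun n => if h : n < d then G ⟨n, h⟩ else 0) d
  have h3 : (∑ n ∈ Finset.range D, if h : n < d then G ⟨n, h⟩ else 0)
      = ∑ n ∈ Finset.range d, if h : n < d then G ⟨n, h⟩ else 0 := by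
    refine (Finset.sum_subset (Finset.range_subset_range.2 hdD) ?_).symm
    intro x _ hx
    rw [dif_neg (by simpa using hx)]
  have h4 : (∑ i : Fin d, if h : i.1 < d then G ⟨i.1, h⟩ else 0) = ∑ i : Fin d, G i := by
    refine Finset.sum_congr rfl fun i _ => ?_
    rw [dif_pos i.2]
  calc (∑ i : Fin D, if hi : i.1 < d then G ⟨i.1, hi⟩ else 0)
      = ∑ n ∈ Finset.range D, if h : n < d then G ⟨n, h⟩ else 0 := h1
    _ = ∑ n ∈ Finset.range d, if h : n < d then G ⟨n, h⟩ else 0 := h3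
    _ = ∑ i : Fin d, if h : i.1 < d then G ⟨i.1, h⟩ else 0 := h2.symm
    _ = ∑ i : Fin d, G i := h4

/-- `Reach` is monotone under padding the family. -/
lemma reach_pad {X : Type*} [NormedAddCommGroup X] [NormedSpace ℝ X]
    {d D : ℕ} (hdD : d ≤ D) (hd : 0 < d) (σs : Fin d → StrongDual ℝ X)
    (c θ θ₀ : ℝ) :
    Reach σs c θ θ₀ ⊆
      Reach (fun i : Fin D => if hi : i.1 < d then σs ⟨i.1, hi⟩ else σs ⟨0, hd⟩) c θ θ₀ := by
  rintro σ ⟨τ, hτ0, hτ, β, hβ, hnorm⟩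
  refine ⟨τ, hτ0, hτ, fun i => if hi : i.1 < d then β ⟨i.1, hi⟩ else 0, ?_, ?_⟩
  · have : (∑ i : Fin D, |if hi : i.1 < d then β ⟨i.1, hi⟩ else 0|)
        = ∑ i : Fin D, if hi : i.1 < d then |β ⟨i.1, hi⟩| else 0 := by
      refine Finset.sum_congr rfl fun i _ => ?_
      by_cases hi : i.1 < d <;> simp [hi]
    rw [this, sum_dite_fin hdD (fun i => |β i|)]
    exact hβ
  · have : (∑ i : Fin D, (if hi : i.1 < d then β ⟨i.1, hi⟩ else 0) •
        (if hi : i.1 < d then σs ⟨i.1, hi⟩ else σs ⟨0, hd⟩))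
        = ∑ i : Fin D, if hi : i.1 < d then β ⟨i.1, hi⟩ • σs ⟨i.1, hi⟩ else 0 := by
      refine Finset.sum_congr rfl fun i _ => ?_
      by_cases hi : i.1 < d <;> simp [hi]
    rw [this, sum_dite_fin hdD (fun i => β i • σs i)]
    exact hnorm

/-- Sum over a padded index set via an embedding. -/
lemma sum_pad {ι : Type*} [Fintype ι] {D : ℕ} (emb : ι ↪ Fin D) {M : Type*} [AddCommMonoid M]
    (G : Fin D → M) (hG : ∀ s, (∀ i, emb i ≠ s) → G s = 0) :
    ∑ s : Fin D, G s = ∑ i : ι, G (emb i) := by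
  classical
  have h1 : ∑ s ∈ Finset.univ.image emb, G s = ∑ i : ι, G (emb i) :=
    Finset.sum_image (fun x _ y _ h => emb.injective h)
  rw [← h1]
  refine (Finset.sum_subset (Finset.subset_univ _) ?_).symm
  intro s _ hs
  refine hG s fun i hi => hs ?_
  rw [← hi]; exact Finset.mem_image_of_mem _ (Finset.mem_univ i)

/-- Greedy extraction of a covering family. -/
lemma exists_covering_family {X : Type*} [NormedAddCommGroup X] [NormedSpace ℝ X]
    (S : Finset (StrongDual ℝ X)) (hSne : S.Nonempty) (K : ℕ) (hK1 : 1 ≤ K)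
    (c θ θ₀ : ℝ)
    (hreach : ∀ σs : Fin (K + 1) → StrongDual ℝ X, (∀ i, σs i ∈ S) →
      ∃ j : ℕ, ∃ h1 : 1 ≤ j, ∃ h2 : j ≤ K,
        σs ⟨j, Nat.lt_succ_of_le h2⟩ ∈
          Reach (fun i : Fin j => σs ⟨i.1, i.2.trans (Nat.lt_succ_of_le h2)⟩) c θ θ₀) :
    ∃ σs : Fin K → StrongDual ℝ X, (∀ i, σs i ∈ S) ∧
      ∀ σ ∈ S, σ ∈ Reach σs c θ θ₀ := by
  obtain ⟨σ₀, hσ₀⟩ := hSne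
  have main : ∀ m : ℕ, m ≤ K →
      (∃ σs : Fin K → StrongDual ℝ X, (∀ i, σs i ∈ S) ∧
        ∀ σ ∈ S, σ ∈ Reach σs c θ θ₀) ∨
      (∃ σs : Fin (m + 1) → StrongDual ℝ X, (∀ i, σs i ∈ S) ∧
        ∀ j : ℕ, 0 < j → ∀ hj : j < m + 1,
          σs ⟨j, hj⟩ ∉ Reach (fun i : Fin j => σs ⟨i.1, i.2.trans hj⟩) c θ θ₀) := by
    intro m
    induction m with
    | zero =>
      intro _
      right
      exact ⟨fun _ => σ₀, fun _ => hσ₀, fun j hj0 hj1 => by omega⟩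
    | succ m ih =>
      intro hm1K
      rcases ih (by omega) with good | ⟨σs, hmem, hbad⟩
      · exact Or.inl good
      · by_cases hcov : ∀ σ ∈ S, σ ∈ Reach σs c θ θ₀
        · left
          refine ⟨fun i => if hi : i.1 < m + 1 then σs ⟨i.1, hi⟩ else σs ⟨0, by omega⟩, ?_, ?_⟩
          · intro i; dsimp only; split <;> exact hmem _
          · intro σ hσ
            exact reach_pad hm1K (by omega) σs c θ θ₀ (hcov σ hσ)
        · push_neg at hcov
          obtain ⟨σ', hσ'S, hσ'⟩ := hcov
          right
          refine ⟨fun i => if hi : i.1 < m + 1 then σs ⟨i.1, hi⟩ else σ', ?_, ?_⟩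
          · intro i; dsimp only; split; exacts [hmem _, hσ'S]
          · intro j hj0 hj
            by_cases hjm : j < m + 1
            · have hfun : (fun i : Fin j =>
                  (fun i' : Fin (m + 2) =>
                    if hi : i'.1 < m + 1 then σs ⟨i'.1, hi⟩ else σ') ⟨i.1, i.2.trans hj⟩)
                  = fun i : Fin j => σs ⟨i.1, i.2.trans hjm⟩ := by
                funext i
                exact dif_pos (i.2.trans hjm)
            
              have hval : (fun i' : Fin (m + 2) =>
                  if hi : i'.1 < m + 1 then σs ⟨i'.1, hi⟩ else σ') ⟨j, hj⟩ = σs ⟨j, hjm⟩ :=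
                dif_pos hjm
              rw [hfun, hval]
              exact hbad j hj0 hjm
            · have hjeq : j = m + 1 := by omega
              subst hjeq
              have hfun : (fun i : Fin (m + 1) =>
                  (fun i' : Fin (m + 2) =>
                    if hi : i'.1 < m + 1 then σs ⟨i'.1, hi⟩ else σ') ⟨i.1, i.2.trans hj⟩)
                  = σs := by
                funext i
                show (if hi : (i : ℕ) < m + 1 then σs ⟨(i : ℕ), hi⟩ else σ') = σs i
                rw [dif_pos i.2]
              have hval : (fun i' : Fin (m + 2) =>
                  if hi : i'.1 < m + 1 then σs ⟨i'.1, hi⟩ else σ') ⟨m + 1, hj⟩ = σ' := by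
                show (if hi : m + 1 < m + 1 then σs ⟨m + 1, hi⟩ else σ') = σ'
                rw [dif_neg hjm]
              rw [hfun, hval]
              exact hσ'
  rcases main K le_rfl with good | ⟨σs, hmem, hbad⟩
  · exact good
  · exfalso
    obtain ⟨j, h1, h2, hmemR⟩ := hreach σs hmem
    exact hbad j h1 (Nat.lt_succ_of_le h2) hmemR

/-- Banach GRIM convergence: existence of a sparse approximation. -/
theorem banach_GRIM_convergence
    {X : Type*} [NormedAddCommGroup X] [NormedSpace ℝ X] [CompleteSpace X]
    (ε ε₀ : ℝ) (hε₀ : 0 < ε₀) (hε : ε₀ < ε)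
    (N Λ : ℕ) (hN : 1 ≤ N) (hΛ : 1 ≤ Λ)
    (f : Fin N → X) (hf : ∀ i, f i ≠ 0)
    (S : Finset (StrongDual ℝ X)) (hS : S.card = Λ)
    (a : Fin N → ℝ) (ha : ∀ i, a i ≠ 0)
    (φ : X) (hφ : φ = ∑ i, a i • f i)
    (C : ℝ) (hC : C = ∑ i, |a i| * ‖f i‖)
    (K : ℕ) (hK1 : 1 ≤ K) (hKN : K ≤ N - 1) (hKΛ : K ≤ Λ)
    (hreach : ∀ σs : Fin (K + 1) → StrongDual ℝ X, (∀ i, σs i ∈ S) →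
      ∃ j : ℕ, ∃ h1 : 1 ≤ j, ∃ h2 : j ≤ K,
        σs ⟨j, Nat.lt_succ_of_le h2⟩ ∈
          Reach (fun i : Fin j => σs ⟨i.1, i.2.trans (Nat.lt_succ_of_le h2)⟩)
            (2 * C) ε ε₀) :
    ∃ n : ℕ, 1 ≤ n ∧ n ≤ K ∧
      ∃ (c : Fin (n + 1) → ℝ) (e : Fin (n + 1) → Fin N),
        (∑ s, |c s| * ‖f (e s)‖) = C ∧
        (∀ σ ∈ S, |σ (φ - ∑ s, c s • f (e s))| ≤ ε) ∧
        ((∀ i, 0 < a i) → ∀ s, 0 ≤ c s) := by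
  classical
  have hNne : Nonempty (Fin N) := ⟨⟨0, hN⟩⟩
  set w : Fin N → ℝ := fun i => |a i| * ‖f i‖ with hw
  have hwpos : ∀ i, 0 < w i := fun i => mul_pos (abs_pos.2 (ha i)) (norm_pos_iff.2 (hf i))
  have hsumw : ∑ i, w i = C := hC.symm
  have hCpos : 0 < C := by
    rw [← hsumw]
    exact Finset.sum_pos (fun i _ => hwpos i) Finset.univ_nonempty
  have hSne : S.Nonempty := by rw [← Finset.card_pos, hS]; omega
  obtain ⟨σs, hσsS, hcov⟩ := exists_covering_family S hSne K hK1 (2 * C) ε ε₀ hreach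
  -- normalized vectors
  set g : Fin N → X := fun i => ((w i)⁻¹ * a i) • f i with hg
  have hwg : ∀ i, w i • g i = a i • f i := by
    intro i
    rw [hg]
    dsimp only
    rw [smul_smul]
    congr 1
    field_simp [(hwpos i).ne']
  have hφ' : φ = ∑ i, w i • g i := by
    rw [hφ]
    exact (Finset.sum_congr rfl fun i _ => hwg i).symm
  -- points in ℝ^K
  set p : Fin N → (Fin K → ℝ) := fun i k => σs k (g i) with hp
  have hx : Finset.univ.centerMass w p ∈ convexHull ℝ (Set.range p) :=
    Finset.centerMass_mem_convexHull _ (fun i _ => (hwpos i).le)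
      (by rw [hsumw]; exact hCpos) (fun i _ => Set.mem_range_self i)
  obtain ⟨ι, hι, z, μ, hzr, hai, hμpos, hμsum, hμx⟩ := eq_pos_convex_span_of_mem_convexHull hx
  letI := hι
  have hcard : Fintype.card ι ≤ K + 1 := by
    have h1 := hai.card_le_finrank_succ
    have h2 : Module.finrank ℝ (vectorSpan ℝ (Set.range z)) ≤ Module.finrank ℝ (Fin K → ℝ) :=
      Submodule.finrank_le _
    have h3 : Module.finrank ℝ (Fin K → ℝ) = K := Module.finrank_fin_fun ℝ
    omega
  obtain ⟨emb⟩ : Nonempty (ι ↪ Fin (K + 1)) :=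
    Function.Embedding.nonempty_of_card_le (by simpa using hcard)
  choose e0 he0 using fun i => hzr (Set.mem_range_self i)
  -- coefficients
  set cv : ι → ℝ := fun i => C * μ i * (a (e0 i) / (|a (e0 i)| * ‖f (e0 i)‖)) with hcv
  set cc : Fin (K + 1) → ℝ :=
    fun s => if h : ∃ i, emb i = s then cv h.choose else 0 with hcc
  set ee : Fin (K + 1) → Fin N :=
    fun s => if h : ∃ i, emb i = s then e0 h.choose else ⟨0, hN⟩ with hee
  have hchoose : ∀ i : ι, (⟨i, rfl⟩ : ∃ j, emb j = emb i).choose = i := fun i =>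
    emb.injective (⟨i, rfl⟩ : ∃ j, emb j = emb i).choose_spec
  have hccemb : ∀ i, cc (emb i) = cv i := by
    intro i
    rw [hcc]
    dsimp only
    rw [dif_pos ⟨i, rfl⟩, hchoose i]
  have heeemb : ∀ i, ee (emb i) = e0 i := by
    intro i
    rw [hee]
    dsimp only
    rw [dif_pos ⟨i, rfl⟩, hchoose i]
  have hcczero : ∀ s, (∀ i, emb i ≠ s) → cc s = 0 := by
    intro s hs
    rw [hcc]
    dsimp only
    rw [dif_neg (by rintro ⟨i, rfl⟩; exact hs i rfl)]
  -- key computation facts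
  have habs : ∀ i : ι, |cv i| * ‖f (e0 i)‖ = C * μ i := by
    intro i
    have h1 : (0:ℝ) < |a (e0 i)| := abs_pos.2 (ha _)
    have h2 : (0:ℝ) < ‖f (e0 i)‖ := norm_pos_iff.2 (hf _)
    rw [hcv]
    dsimp only
    rw [abs_mul, abs_mul, abs_div, abs_of_pos hCpos, abs_of_pos (hμpos i),
      abs_of_pos (mul_pos h1 h2)]
    have hone : |a (e0 i)| / (|a (e0 i)| * ‖f (e0 i)‖) * ‖f (e0 i)‖ = 1 := by
      field_simp
    rw [mul_assoc, hone, mul_one]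
  have hsmul : ∀ i : ι, cv i • f (e0 i) = (C * μ i) • g (e0 i) := by
    intro i
    have h1 : (0:ℝ) < |a (e0 i)| := abs_pos.2 (ha _)
    have h2 : (0:ℝ) < ‖f (e0 i)‖ := norm_pos_iff.2 (hf _)
    rw [hg]
    dsimp only
    rw [smul_smul]
    congr 1
    rw [hcv]
    dsimp only [hw]
    field_simp
    simp only [hw]
    rw [eq_div_iff (mul_pos h1 h2).ne']
    ring
  -- the weight identity (A)
  have hsumA : (∑ s, |cc s| * ‖f (ee s)‖) = C := by
    rw [sum_pad emb (fun s => |cc s| * ‖f (ee s)‖)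
      (fun s hs => by rw [hcczero s hs]; simp)]
    calc (∑ i : ι, |cc (emb i)| * ‖f (ee (emb i))‖)
        = ∑ i : ι, C * μ i := by
          refine Finset.sum_congr rfl fun i _ => ?_
          rw [hccemb, heeemb, habs]
      _ = C := by rw [← Finset.mul_sum, hμsum, mul_one]
  -- the interpolation identity
  have hu : ∀ k : Fin K, σs k (∑ s, cc s • f (ee s)) = σs k φ := by
    intro k
    have hu1 : (∑ s, cc s • f (ee s)) = ∑ i : ι, (C * μ i) • g (e0 i) := by
      rw [sum_pad emb (fun s => cc s • f (ee s))
        (fun s hs => by rw [hcczero s hs, zero_smul])]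
      refine Finset.sum_congr rfl fun i _ => ?_
      rw [hccemb, heeemb, hsmul]
    rw [hu1, map_sum]
    have hz1 : ∀ i : ι, σs k ((C * μ i) • g (e0 i)) = C * (μ i * z i k) := by
      intro i
      rw [map_smul, smul_eq_mul]
      have : σs k (g (e0 i)) = z i k := congrFun (he0 i) k
      rw [this]
      ring
    rw [Finset.sum_congr rfl fun i _ => hz1 i, ← Finset.mul_sum]
    have hzk : (∑ i : ι, μ i * z i k) = Finset.univ.centerMass w p k := by
      rw [← hμx, Finset.sum_apply]
      refine Finset.sum_congr rfl fun i _ => ?_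
      rw [Pi.smul_apply, smul_eq_mul]
    rw [hzk]
    have hcm : Finset.univ.centerMass w p k = C⁻¹ * ∑ i, w i * p i k := by
      rw [Finset.centerMass, hsumw, Pi.smul_apply, smul_eq_mul, Finset.sum_apply]
      congr 1
    rw [hcm, ← mul_assoc, mul_inv_cancel₀ hCpos.ne', one_mul]
    rw [hφ', map_sum]
    refine (Finset.sum_congr rfl fun i _ => ?_).symm
    rw [map_smul, smul_eq_mul]
  -- norms
  have hφnorm : ‖φ‖ ≤ C := by
    rw [hφ, hC]
    refine (norm_sum_le _ _).trans (le_of_eq ?_)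
    refine Finset.sum_congr rfl fun i _ => ?_
    rw [norm_smul, Real.norm_eq_abs]
  have hunorm : ‖∑ s, cc s • f (ee s)‖ ≤ C := by
    refine (norm_sum_le _ _).trans (le_of_eq ?_)
    rw [← hsumA]
    refine Finset.sum_congr rfl fun s _ => ?_
    rw [norm_smul, Real.norm_eq_abs]
  refine ⟨K, hK1, le_rfl, cc, ee, hsumA, ?_, ?_⟩
  · intro σ hσ
    obtain ⟨τ, hτ0, hτ, β, hβ, hnorm⟩ := hcov σ hσ
    set u := ∑ s, cc s • f (ee s) with hudef
    set T := ∑ k, β k • σs k with hT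
    have hTzero : T (φ - u) = 0 := by
      rw [hT, ContinuousLinearMap.sum_apply]
      refine Finset.sum_eq_zero fun k _ => ?_
      rw [ContinuousLinearMap.smul_apply, map_sub, hu, sub_self, smul_zero]
    have hsub : σ (φ - u) = (σ - T) (φ - u) := by
      rw [ContinuousLinearMap.sub_apply, hTzero, sub_zero]
    have hnum : 0 ≤ ε - τ * ε₀ := by
      have := (le_div_iff₀ hε₀).mp hτ
      linarith
    have h2C : ‖φ - u‖ ≤ 2 * C := (norm_sub_le _ _).trans (by linarith)
    calc |σ (φ - u)| = ‖(σ - T) (φ - u)‖ := by rw [hsub, Real.norm_eq_abs]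
      _ ≤ ‖σ - T‖ * ‖φ - u‖ := (σ - T).le_opNorm _
      _ ≤ ((ε - τ * ε₀) / (2 * C)) * (2 * C) := by
          refine mul_le_mul hnorm h2C (norm_nonneg _) (div_nonneg hnum (by linarith))
      _ = ε - τ * ε₀ := div_mul_cancel₀ _ (by positivity)
      _ ≤ ε := by nlinarith
  · intro hapos s
    rw [hcc]
    dsimp only
    split
    · rename_i h
      rw [hcv]
      dsimp only
      refine mul_nonneg (mul_nonneg hCpos.le (hμpos _).le) (div_nonneg (hapos _).le ?_)
      exact (mul_pos (abs_pos.2 (ha _)) (norm_pos_iff.2 (hf _))).le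
    · exact le_refl 0
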